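/- (Extremal/adjunction characterization of the generalized Schur complement.) Let A be a d×d, B a d×e, D an e×e real matrix, and suppose M = [[A, B], [Bᵀ, D]] is positive semi-definite. Then for every positive semi-definite d×d real matrix N, the block matrix M − [[N, 0], [0, 0]] is positive semi-definite if and only if (A − B·D†·Bᵀ) − N is positive semi-definite, where D† is the Moore–Penrose pseudoinverse of D. In other words, A − B·D†·Bᵀ is the maximum, in the Loewner order, of the set of positive semi-definite N with M − [[N, 0], [0, 0]] ⪰ 0. -/

import Mathlib

open Matrix

/-- `Ddag` is a Moore–Penrose pseudoinverse of `D`. -/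
def IsMoorePenrose {n m : Type*} [Fintype n] [Fintype m]
    (D : Matrix n m ℝ) (Ddag : Matrix m n ℝ) : Prop :=
  D * Ddag * D = D ∧ Ddag * D * Ddag = Ddag ∧
    (D * Ddag)ᵀ = D * Ddag ∧ (Ddag * D)ᵀ = Ddag * D

lemma mp_unique {n : Type*} [Fintype n] (A : Matrix n n ℝ) (X Y : Matrix n n ℝ)
    (hX : IsMoorePenrose A X) (hY : IsMoorePenrose A Y) : X = Y := by
  obtain ⟨hX1, hX2, hX3, hX4⟩ := hX
  obtain ⟨hY1, hY2, hY3, hY4⟩ := hY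
  have h1 : X = X * A * Y := by
    calc X = X * A * X := hX2.symm
    _ = X * (A * X)ᵀ := by rw [hX3]; simp only [Matrix.mul_assoc]
    _ = X * ((A * Y * A) * X)ᵀ := by rw [hY1]
    _ = X * (A * X)ᵀ * (A * Y)ᵀ := by simp only [transpose_mul]; simp only [Matrix.mul_assoc]
    _ = X * (A * X) * (A * Y) := by rw [hX3, hY3]
    _ = (X * A * X) * A * Y := by simp only [Matrix.mul_assoc]
    _ = X * A * Y := by rw [hX2]
  have h2 : Y = X * A * Y := by
    calc Y = Y * A * Y := hY2.symm
    _ = (Y * A)ᵀ * Y := by rw [hY4]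
    _ = ((Y * (A * X * A))ᵀ) * Y := by rw [hX1]
    _ = (X * A)ᵀ * ((Y * A)ᵀ * Y) := by simp only [transpose_mul, Matrix.mul_assoc]
    _ = (X * A) * ((Y * A) * Y) := by rw [hX4, hY4]
    _ = X * A * (Y * A * Y) := by simp only [Matrix.mul_assoc]
    _ = X * A * Y := by rw [hY2]
  rw [h1, ← h2]

lemma psd_add' {n : Type*} [Fintype n] {P Q : Matrix n n ℝ}
    (hP : P.PosSemidef) (hQ : Q.PosSemidef) : (P + Q).PosSemidef :=
  Matrix.PosSemidef.of_dotProduct_mulVec_nonneg (hP.1.add hQ.1) (fun x => by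
    rw [add_mulVec, dotProduct_add]
    exact add_nonneg (hP.dotProduct_mulVec_nonneg x) (hQ.dotProduct_mulVec_nonneg x))

lemma psd_block11 {d e : Type*} [Fintype d] [Fintype e] {S : Matrix d d ℝ}
    (hS : S.PosSemidef) : (fromBlocks S 0 0 (0 : Matrix e e ℝ)).PosSemidef := by
  have hSt : Sᵀ = S := by
    rw [← conjTranspose_eq_transpose_of_trivial]; exact hS.1
  rw [posSemidef_iff_dotProduct_mulVec]
  constructor
  · show _ᴴ = _
    rw [conjTranspose_eq_transpose_of_trivial, fromBlocks_transpose]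
    simp [hSt]
  · intro x
    obtain ⟨x1, x2, rfl⟩ : ∃ a b, Sum.elim a b = x :=
      ⟨x ∘ Sum.inl, x ∘ Sum.inr, Sum.elim_comp_inl_inr x⟩
    simpa only [star_trivial, fromBlocks_mulVec, sumElim_dotProduct_sumElim,
      Matrix.zero_mulVec, add_zero, zero_add, dotProduct_zero, Sum.elim_comp_inl,
      Sum.elim_comp_inr] using hS.dotProduct_mulVec_nonneg x1
  
lemma psd_block22 {d e : Type*} [Fintype d] [Fintype e] {D : Matrix e e ℝ}
    (hD : D.PosSemidef) : (fromBlocks (0 : Matrix d d ℝ) 0 0 D).PosSemidef := by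
  have hDt : Dᵀ = D := by
    rw [← conjTranspose_eq_transpose_of_trivial]; exact hD.1
  rw [posSemidef_iff_dotProduct_mulVec]
  constructor
  · show _ᴴ = _
    rw [conjTranspose_eq_transpose_of_trivial, fromBlocks_transpose]
    simp [hDt]
  · intro x
    obtain ⟨x1, x2, rfl⟩ : ∃ a b, Sum.elim a b = x :=
      ⟨x ∘ Sum.inl, x ∘ Sum.inr, Sum.elim_comp_inl_inr x⟩
    simpa only [star_trivial, fromBlocks_mulVec, sumElim_dotProduct_sumElim,
      Matrix.zero_mulVec, add_zero, zero_add, dotProduct_zero, Sum.elim_comp_inl,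
      Sum.elim_comp_inr] using hD.dotProduct_mulVec_nonneg x2

/-- Extremal/adjunction characterization of the generalized Schur complement: for
`M = [[A, B], [Bᵀ, D]]` positive semi-definite and any positive semi-definite `N`,
`M − [[N, 0], [0, 0]] ⪰ 0` iff `(A − B D† Bᵀ) − N ⪰ 0`. -/
theorem schur_complement_extremal_characterization
    {d e : Type*} [Fintype d] [Fintype e] [DecidableEq d] [DecidableEq e]
    (A : Matrix d d ℝ) (B : Matrix d e ℝ) (D : Matrix e e ℝ)
    (Ddag : Matrix e e ℝ) (hD : IsMoorePenrose D Ddag)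
    (hM : (Matrix.fromBlocks A B Bᵀ D).PosSemidef) :
    ∀ N : Matrix d d ℝ, N.PosSemidef →
      ((Matrix.fromBlocks A B Bᵀ D - Matrix.fromBlocks N 0 0 0).PosSemidef ↔
        (A - B * Ddag * Bᵀ - N).PosSemidef) := by
  intro N hN
  have hsubD : (fromBlocks A B Bᵀ D).submatrix Sum.inr Sum.inr = D := by
    ext i j; simp
  have hsubA : (fromBlocks A B Bᵀ D).submatrix Sum.inl Sum.inl = A := by
    ext i j; simp
  have hDpsd : D.PosSemidef := hsubD ▸ hM.submatrix Sum.inr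
  have hApsd : A.PosSemidef := hsubA ▸ hM.submatrix Sum.inl
  have hDsym : Dᵀ = D := by
    rw [← conjTranspose_eq_transpose_of_trivial]; exact hDpsd.1
  have hAsym : Aᵀ = A := by
    rw [← conjTranspose_eq_transpose_of_trivial]; exact hApsd.1
  obtain ⟨h1, h2, h3, h4⟩ := hD
  -- Ddag is symmetric
  have hDdagSym : Ddagᵀ = Ddag := by
    refine mp_unique D Ddagᵀ Ddag ?_ ⟨h1, h2, h3, h4⟩
    refine ⟨?_, ?_, ?_, ?_⟩
    · calc D * Ddagᵀ * D = (Dᵀ * Ddag * Dᵀ)ᵀ := by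
            simp only [transpose_mul, transpose_transpose, Matrix.mul_assoc]
      _ = D := by rw [hDsym, h1, hDsym]
    · calc Ddagᵀ * D * Ddagᵀ = (Ddag * Dᵀ * Ddag)ᵀ := by
            simp only [transpose_mul, transpose_transpose, Matrix.mul_assoc]
      _ = Ddagᵀ := by rw [hDsym, h2]
    · calc (D * Ddagᵀ)ᵀ = Ddag * Dᵀ := by rw [transpose_mul, transpose_transpose]
      _ = Ddag * D := by rw [hDsym]
      _ = (Ddag * D)ᵀ := h4.symm
      _ = Dᵀ * Ddagᵀ := transpose_mul _ _
      _ = D * Ddagᵀ := by rw [hDsym]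
    · calc (Ddagᵀ * D)ᵀ = Dᵀ * Ddag := by rw [transpose_mul, transpose_transpose]
      _ = D * Ddag := by rw [hDsym]
      _ = (D * Ddag)ᵀ := h3.symm
      _ = Ddagᵀ * Dᵀ := transpose_mul _ _
      _ = Ddagᵀ * D := by rw [hDsym]
  -- kernel of D contained in kernel of B
  have hker : ∀ v : e → ℝ, D *ᵥ v = 0 → B *ᵥ v = 0 := by
    intro v hv
    set u := B *ᵥ v with hu
    set a := u ⬝ᵥ (A *ᵥ u) with ha
    set s := u ⬝ᵥ u with hs
    have key : ∀ t : ℝ, 0 ≤ a + 2 * t * s := by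
      intro t
      have h := hM.dotProduct_mulVec_nonneg (Sum.elim u (t • v))
      simp only [star_trivial, fromBlocks_mulVec, sumElim_dotProduct_sumElim,
        Sum.elim_comp_inl, Sum.elim_comp_inr, mulVec_smul, hv, smul_zero, add_zero,
        dotProduct_add, smul_dotProduct, dotProduct_smul, smul_eq_mul, dotProduct_zero,
        mul_zero] at h
      have hcross : v ⬝ᵥ (Bᵀ *ᵥ u) = s := by
        rw [dotProduct_mulVec, vecMul_transpose, hs, hu, dotProduct_comm]
      have hcross2 : u ⬝ᵥ (B *ᵥ v) = s := by rw [← hu, hs]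
      rw [hcross, hcross2] at h
      nlinarith [h]
    have hsnn : 0 ≤ s := by
      rw [hs]
      exact Finset.sum_nonneg fun i _ => mul_self_nonneg _
    have hs0 : s = 0 := by
      rcases eq_or_lt_of_le hsnn with h | h
      · exact h.symm
      · exfalso
        have hk := key ((-(a + s)) / (2 * s))
        have heq : 2 * ((-(a + s)) / (2 * s)) * s = -(a + s) := by
          field_simp
        rw [heq] at hk
        linarith
    exact dotProduct_self_eq_zero.mp hs0
  -- range conditions
  have key2 : ∀ C : Matrix e e ℝ, D * C = 0 → B * C = 0 := by
    intro C hC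
    ext i j
    have hD0 : D *ᵥ (fun k => C k j) = 0 := by
      ext i'
      have := congrFun (congrFun hC i') j
      simpa [mulVec, dotProduct, Matrix.mul_apply] using this
    have hB0 := hker _ hD0
    have := congrFun hB0 i
    simpa [mulVec, dotProduct, Matrix.mul_apply] using this
  have hB : B * (Ddag * D) = B := by
    have h0 : D * (1 - Ddag * D) = 0 := by
      rw [Matrix.mul_sub, Matrix.mul_one, ← Matrix.mul_assoc, h1, sub_self]
    have hz := key2 _ h0
    rw [Matrix.mul_sub, Matrix.mul_one, sub_eq_zero] at hz
    exact hz.symm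
  have hBt : D * Ddag * Bᵀ = Bᵀ := by
    have h := congrArg Matrix.transpose hB
    rw [transpose_mul, transpose_mul, hDsym, hDdagSym] at h
    exact h
  have hBt' : D * (Ddag * Bᵀ) = Bᵀ := by rw [← Matrix.mul_assoc]; exact hBt
  have hblocks : Matrix.fromBlocks A B Bᵀ D - Matrix.fromBlocks N 0 0 0 =
      fromBlocks (A - N) B Bᵀ D := by
    ext (i | i) (j | j) <;> simp [fromBlocks]
  rw [hblocks]
  constructor
  · -- forward direction
    intro h
    rw [posSemidef_iff_dotProduct_mulVec]
    constructor
    · show _ᴴ = _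
      have hNsym : Nᵀ = N := by
        rw [← conjTranspose_eq_transpose_of_trivial]; exact hN.1
      have hSchur : (B * Ddag * Bᵀ)ᵀ = B * Ddag * Bᵀ := by
        simp only [transpose_mul, transpose_transpose, hDdagSym, Matrix.mul_assoc]
      rw [conjTranspose_eq_transpose_of_trivial, transpose_sub, transpose_sub,
        hAsym, hNsym, hSchur]
    · intro x
      have hz := h.dotProduct_mulVec_nonneg (Sum.elim x (-((Ddag * Bᵀ) *ᵥ x)))
      have hDy : D *ᵥ (-((Ddag * Bᵀ) *ᵥ x)) = -(Bᵀ *ᵥ x) := by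
        rw [mulVec_neg, mulVec_mulVec, ← Matrix.mul_assoc, hBt]
      simp only [star_trivial, fromBlocks_mulVec, sumElim_dotProduct_sumElim,
        Sum.elim_comp_inl, Sum.elim_comp_inr, hDy, add_neg_cancel,
        dotProduct_zero, add_zero] at hz
      have hvec : (A - B * Ddag * Bᵀ - N) *ᵥ x =
          (A - N) *ᵥ x + B *ᵥ (-((Ddag * Bᵀ) *ᵥ x)) := by
        rw [mulVec_neg, mulVec_mulVec, sub_mulVec, sub_mulVec, sub_mulVec,
          Matrix.mul_assoc]
        abel
      rw [star_trivial, hvec]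
      exact hz
  · -- backward direction
    intro h
    have hQ1 : (fromBlocks 0 (B * Ddag) 0 (1 : Matrix e e ℝ)) *
        (fromBlocks (0 : Matrix d d ℝ) 0 0 D) =
        fromBlocks (0 : Matrix d d ℝ) B (0 : Matrix e d ℝ) D := by
      rw [fromBlocks_multiply]
      simp only [Matrix.mul_zero, Matrix.zero_mul, Matrix.one_mul, add_zero, zero_add]
      rw [Matrix.mul_assoc, hB]
    have hQ2 : (fromBlocks (0 : Matrix d d ℝ) B (0 : Matrix e d ℝ) D) *
        (fromBlocks 0 (B * Ddag) 0 (1 : Matrix e e ℝ))ᵀ =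
        fromBlocks (B * Ddag * Bᵀ) B Bᵀ D := by
      rw [fromBlocks_transpose, fromBlocks_multiply]
      simp only [Matrix.mul_zero, Matrix.zero_mul, Matrix.mul_one, add_zero, zero_add,
        transpose_zero, transpose_one, transpose_mul, hDdagSym]
      rw [hBt', ← Matrix.mul_assoc]
    have hdecomp : fromBlocks (A - N) B Bᵀ D =
        fromBlocks (A - B * Ddag * Bᵀ - N) 0 0 0 +
          (fromBlocks 0 (B * Ddag) 0 (1 : Matrix e e ℝ)) *
            (fromBlocks (0 : Matrix d d ℝ) 0 0 D) *
            (fromBlocks 0 (B * Ddag) 0 (1 : Matrix e e ℝ))ᵀ := by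
      rw [Matrix.mul_assoc, ← Matrix.mul_assoc, hQ1, hQ2]
      ext (i | i) (j | j) <;> simp [fromBlocks] <;> ring
    rw [hdecomp]
    refine psd_add' (psd_block11 h) ?_
    have hc := (psd_block22 (d := d) hDpsd).mul_mul_conjTranspose_same
      (fromBlocks 0 (B * Ddag) 0 (1 : Matrix e e ℝ))
    rwa [conjTranspose_eq_transpose_of_trivial] at hc
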